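/- Let f : 𝖱^n → 𝖱 be continuous and let I ⊆ N = {1,…,n} be nonempty. If f is I-cofinal and I ⊆ J ⊆ N, then f is J-cofinal. -/

import Mathlib

noncomputable section
open Set

/-- The first uncountable ordinal `ω₁`. -/
def Omega1 : Ordinal := Ordinal.omega 1

/-- The closed long ray `𝖱`: `ω₁ × [0,1)` with the lexicographic order. -/
def LongRay : Type 1 := {o : Ordinal // o < Omega1} ×ₗ (Set.Ico (0:ℝ) 1)

instance : LinearOrder LongRay :=
  inferInstanceAs (LinearOrder ({o : Ordinal // o < Omega1} ×ₗ (Set.Ico (0:ℝ) 1)))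

/-- `𝖱` carries the order topology. -/
instance : TopologicalSpace LongRay := Preorder.topology LongRay
instance : OrderTopology LongRay := ⟨rfl⟩

lemma omega1_pos : (0 : Ordinal) < Omega1 := Ordinal.omega_pos 1

/-- The point `0 = (0,0)` of the long ray. -/
def rayZero : LongRay := toLex (⟨0, omega1_pos⟩, ⟨0, by simp⟩)

/-- Identification of the countable ordinal `o` with the point `(o,0)` of the long ray
(junk value for `o ≥ ω₁`). -/
def ordR (o : Ordinal) : LongRay :=
  if h : o < Omega1 then toLex (⟨o, h⟩, ⟨0, by simp⟩) else rayZero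

/-- The `I`-diagonal at height `c` (only the values of `c` off `I` are relevant). -/
def Delta (n : ℕ) (I : Finset (Fin n)) (c : Fin n → LongRay) : Set (Fin n → LongRay) :=
  {x | (∀ i ∈ I, ∀ i' ∈ I, x i = x i') ∧ ∀ j ∉ I, x j = c j}

/-- `f` is `I`-cofinal if `f` restricted to `Δ_I = Δ_I(0)` is unbounded. -/
def ICofinal (n : ℕ) (f : (Fin n → LongRay) → LongRay) (I : Finset (Fin n)) : Prop :=
  ¬ BddAbove (f '' Delta n I (fun _ => rayZero))

/-- The cofinality class `𝔠(f) = {I : f is I-cofinal}`. -/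
def cofClass (n : ℕ) (f : (Fin n → LongRay) → LongRay) : Set (Finset (Fin n)) :=
  {I | ICofinal n f I}

/-- `M_I(c) = {x : x_i ≥ c for all i ∈ I}`. -/
def MSet (n : ℕ) (I : Finset (Fin n)) (c : LongRay) : Set (Fin n → LongRay) :=
  {x | ∀ i ∈ I, c ≤ x i}

/-- `E_I(b,d) = {x ∈ M_I(d) : x_j = b_j for all j ∉ I}`. -/
def ESet (n : ℕ) (I : Finset (Fin n)) (b : Fin n → LongRay) (d : LongRay) :
    Set (Fin n → LongRay) :=
  {x | (∀ i ∈ I, d ≤ x i) ∧ ∀ j ∉ I, x j = b j}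

-- API
namespace LR

lemma omega1_eq : Omega1 = (Cardinal.aleph 1).ord := (Cardinal.ord_aleph 1).symm

lemma omega1_isLimit : Order.IsSuccLimit Omega1 := by
  rw [omega1_eq]; exact Cardinal.isSuccLimit_ord (Cardinal.aleph0_le_aleph 1)

def ordOf (z : LongRay) : Ordinal := ((ofLex z).1 : Ordinal)
def reOf (z : LongRay) : ℝ := ((ofLex z).2 : ℝ)

lemma ordOf_lt (z : LongRay) : ordOf z < Omega1 := (ofLex z).1.2
lemma reOf_nonneg (z : LongRay) : 0 ≤ reOf z := (ofLex z).2.2.1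
lemma reOf_lt_one (z : LongRay) : reOf z < 1 := (ofLex z).2.2.2

def mk (a : Ordinal) (ha : a < Omega1) (r : ℝ) (hr : 0 ≤ r ∧ r < 1) : LongRay :=
  toLex (⟨a, ha⟩, ⟨r, hr⟩)

@[simp] lemma ordOf_mk (a ha r hr) : ordOf (mk a ha r hr) = a := rfl
@[simp] lemma reOf_mk (a ha r hr) : reOf (mk a ha r hr) = r := rfl
@[simp] lemma ordOf_rayZero : ordOf rayZero = 0 := rfl
@[simp] lemma reOf_rayZero : reOf rayZero = 0 := rfl

lemma mk_eta (z : LongRay) : mk (ordOf z) (ordOf_lt z) (reOf z) ⟨reOf_nonneg z, reOf_lt_one z⟩ = z := rfl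

lemma le_def {z w : LongRay} :
    z ≤ w ↔ ordOf z < ordOf w ∨ (ordOf z = ordOf w ∧ reOf z ≤ reOf w) := by
  show toLex (ofLex z) ≤ toLex (ofLex w) ↔ _
  rw [Prod.Lex.le_iff]
  constructor
  · rintro (h | ⟨h1, h2⟩)
    · exact Or.inl h
    · exact Or.inr ⟨congrArg Subtype.val h1, h2⟩
  · rintro (h | ⟨h1, h2⟩)
    · exact Or.inl h
    · exact Or.inr ⟨Subtype.ext h1, h2⟩

lemma lt_def {z w : LongRay} :
    z < w ↔ ordOf z < ordOf w ∨ (ordOf z = ordOf w ∧ reOf z < reOf w) := by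
  show toLex (ofLex z) < toLex (ofLex w) ↔ _
  rw [Prod.Lex.lt_iff]
  constructor
  · rintro (h | ⟨h1, h2⟩)
    · exact Or.inl h
    · exact Or.inr ⟨congrArg Subtype.val h1, h2⟩
  · rintro (h | ⟨h1, h2⟩)
    · exact Or.inl h
    · exact Or.inr ⟨Subtype.ext h1, h2⟩

lemma ext_iff {z w : LongRay} : z = w ↔ ordOf z = ordOf w ∧ reOf z = reOf w := by
  constructor
  · rintro rfl; exact ⟨rfl, rfl⟩
  · rintro ⟨h1, h2⟩
    show toLex (ofLex z) = toLex (ofLex w)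
    congr 1
    exact Prod.ext (Subtype.ext h1) (Subtype.ext h2)

lemma rayZero_le (z : LongRay) : rayZero ≤ z := by
  rcases eq_or_ne (ordOf z) 0 with h | h
  · exact le_def.2 (Or.inr ⟨h.symm, reOf_nonneg z⟩)
  · exact le_def.2 (Or.inl (by simpa using pos_iff_ne_zero.2 h))

lemma exists_gt (z : LongRay) : ∃ w, z < w := by
  refine ⟨mk (ordOf z + 1) ?_ 0 ⟨le_refl 0, one_pos⟩, ?_⟩
  · rw [Ordinal.add_one_eq_succ]
    exact omega1_isLimit.succ_lt (ordOf_lt z)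
  · refine lt_def.2 (Or.inl ?_)
    simp only [ordOf_mk, Ordinal.add_one_eq_succ]
    exact Order.lt_succ _

lemma dense_lt {a b : LongRay} (h : a < b) : ∃ c, a < c ∧ c < b := by
  rcases lt_def.1 h with h1 | ⟨h1, h2⟩
  · refine ⟨mk (ordOf a) (ordOf_lt a) ((reOf a + 1)/2) ⟨by nlinarith [reOf_nonneg a], by nlinarith [reOf_lt_one a]⟩, ?_, ?_⟩
    · refine lt_def.2 (Or.inr ⟨rfl, ?_⟩)
      simp only [reOf_mk]
      nlinarith [reOf_lt_one a]
    · exact lt_def.2 (Or.inl (by simpa using h1))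
  · refine ⟨mk (ordOf a) (ordOf_lt a) ((reOf a + reOf b)/2) ⟨by nlinarith [reOf_nonneg a, reOf_nonneg b], by nlinarith [reOf_lt_one a, reOf_lt_one b]⟩, ?_, ?_⟩
    · refine lt_def.2 (Or.inr ⟨rfl, ?_⟩)
      simp only [reOf_mk]; nlinarith
    · refine lt_def.2 (Or.inr ⟨h1, ?_⟩)
      simp only [reOf_mk]; nlinarith

lemma seq_bddAbove (u : ℕ → LongRay) : ∃ b, ∀ n, u n ≤ b := by
  set o : ℕ → Ordinal := fun n => ordOf (u n) with ho
  have hlt : ∀ n, o n < (Cardinal.aleph 1).ord := fun n => omega1_eq ▸ ordOf_lt (u n)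
  have hsup : iSup o < (Cardinal.aleph 1).ord := by rw [Cardinal.ord_aleph] at hlt ⊢; exact Ordinal.iSup_lt_omega_one hlt
  have hsup1 : iSup o + 1 < Omega1 := by
    rw [Ordinal.add_one_eq_succ, omega1_eq]
    exact (Cardinal.isSuccLimit_ord (Cardinal.aleph0_le_aleph 1)).succ_lt hsup
  refine ⟨mk (iSup o + 1) hsup1 0 ⟨le_refl 0, one_pos⟩, fun n => ?_⟩
  refine le_def.2 (Or.inl ?_)
  simp only [ordOf_mk]
  calc o n ≤ iSup o := Ordinal.le_iSup o n
    _ < iSup o + 1 := by rw [Ordinal.add_one_eq_succ]; exact Order.lt_succ _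

lemma ordOf_mono {z w : LongRay} (h : z ≤ w) : ordOf z ≤ ordOf w := by
  rcases le_def.1 h with h | ⟨h, _⟩
  · exact le_of_lt h
  · exact le_of_eq h

lemma exists_isLUB (S : Set LongRay) (hne : S.Nonempty) (hbdd : BddAbove S) :
    ∃ l, IsLUB S l := by
  obtain ⟨bd, hbd⟩ := hbdd
  set T : Set Ordinal := ordOf '' S with hT
  have hTne : T.Nonempty := hne.image _
  have hTbdd : BddAbove T := by
    refine ⟨ordOf bd, ?_⟩
    rintro _ ⟨z, hz, rfl⟩
    exact ordOf_mono (hbd hz)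
  set B := sSup T with hB
  have hBub : ∀ z ∈ S, ordOf z ≤ B := fun z hz => le_csSup hTbdd ⟨z, hz, rfl⟩
  have hBle : ∀ c : LongRay, c ∈ upperBounds S → B ≤ ordOf c := by
    intro c hc
    exact csSup_le hTne (by rintro _ ⟨z, hz, rfl⟩; exact ordOf_mono (hc hz))
  have hBlt : B < Omega1 := lt_of_le_of_lt (hBle bd hbd) (ordOf_lt bd)
  by_cases hatt : ∃ z ∈ S, ordOf z = B
  · obtain ⟨z0, hz0S, hz0⟩ := hatt
    set X : Set ℝ := reOf '' {z ∈ S | ordOf z = B} with hX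
    have hXne : X.Nonempty := ⟨reOf z0, z0, ⟨hz0S, hz0⟩, rfl⟩
    have hXbdd : BddAbove X := ⟨1, by rintro _ ⟨z, hz, rfl⟩; exact le_of_lt (reOf_lt_one z)⟩
    set x := sSup X with hx
    have hx0 : 0 ≤ x := le_trans (reOf_nonneg z0) (le_csSup hXbdd ⟨z0, ⟨hz0S, hz0⟩, rfl⟩)
    have hxmem : ∀ z ∈ S, ordOf z = B → reOf z ≤ x :=
      fun z hz he => le_csSup hXbdd ⟨z, ⟨hz, he⟩, rfl⟩
    have hxle : ∀ r : ℝ, (∀ z ∈ S, ordOf z = B → reOf z ≤ r) → x ≤ r := by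
      intro r hr
      exact csSup_le hXne (by rintro _ ⟨z, ⟨hz, he⟩, rfl⟩; exact hr z hz he)
    by_cases hxlt : x < 1
    · refine ⟨mk B hBlt x ⟨hx0, hxlt⟩, ?_, ?_⟩
      · intro z hz
        rcases lt_or_eq_of_le (hBub z hz) with h | h
        · exact le_def.2 (Or.inl (by simpa using h))
        · exact le_def.2 (Or.inr ⟨by simpa using h, by simpa using hxmem z hz h⟩)
      · intro c hc
        have h1 : B ≤ ordOf c := hBle c hc
        rcases lt_or_eq_of_le h1 with h | h
        · exact le_def.2 (Or.inl (by simpa using h))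
        · refine le_def.2 (Or.inr ⟨by simpa using h, ?_⟩)
          simp only [reOf_mk]
          refine hxle _ (fun z hz he => ?_)
          rcases le_def.1 (hc hz) with h' | ⟨_, h'⟩
          · exact absurd h' (by rw [he, ← h]; exact lt_irrefl _)
          · exact h'
    · have hx1 : x ≤ 1 := csSup_le hXne (by rintro _ ⟨z, _, rfl⟩; exact le_of_lt (reOf_lt_one z))
      have hxeq : x = 1 := le_antisymm hx1 (not_lt.1 hxlt)
      have hB1 : B + 1 < Omega1 := by
        rw [Ordinal.add_one_eq_succ]
        exact omega1_isLimit.succ_lt hBlt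
      refine ⟨mk (B+1) hB1 0 ⟨le_refl 0, one_pos⟩, ?_, ?_⟩
      · intro z hz
        refine le_def.2 (Or.inl ?_)
        simp only [ordOf_mk]
        calc ordOf z ≤ B := hBub z hz
          _ < B + 1 := by rw [Ordinal.add_one_eq_succ]; exact Order.lt_succ _
      · intro c hc
        have h1 : B ≤ ordOf c := hBle c hc
        have h2 : B ≠ ordOf c := by
          intro h
          have : x ≤ reOf c := by
            refine hxle _ (fun z hz he => ?_)
            rcases le_def.1 (hc hz) with h' | ⟨_, h'⟩
            · exact absurd h' (by rw [he, ← h]; exact lt_irrefl _)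
            · exact h'
          rw [hxeq] at this
          exact absurd (lt_of_lt_of_le (reOf_lt_one c) this) (lt_irrefl _)
        have h3 : B + 1 ≤ ordOf c := by
          rw [Ordinal.add_one_eq_succ, Order.succ_le_iff]
          exact lt_of_le_of_ne h1 h2
        rcases lt_or_eq_of_le h3 with h | h
        · exact le_def.2 (Or.inl (by simpa using h))
        · exact le_def.2 (Or.inr ⟨by simpa using h, by simpa using reOf_nonneg c⟩)
  · refine ⟨mk B hBlt 0 ⟨le_refl 0, one_pos⟩, ?_, ?_⟩
    · intro z hz
      refine le_def.2 (Or.inl ?_)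
      simp only [ordOf_mk]
      exact lt_of_le_of_ne (hBub z hz) (fun h => hatt ⟨z, hz, h⟩)
    · intro c hc
      rcases lt_or_eq_of_le (hBle c hc) with h | h
      · exact le_def.2 (Or.inl (by simpa using h))
      · exact le_def.2 (Or.inr ⟨by simpa using h, by simpa using reOf_nonneg c⟩)

open Classical in
/-- total constructor -/
def mkO (a : Ordinal) (r : ℝ) : LongRay :=
  if h : a < Omega1 ∧ (0 ≤ r ∧ r < 1) then mk a h.1 r h.2 else rayZero

lemma mkO_eq (a : Ordinal) (r : ℝ) (h1 : a < Omega1) (h2 : 0 ≤ r ∧ r < 1) :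
    mkO a r = mk a h1 r h2 := dif_pos ⟨h1, h2⟩

lemma left_approach (y : LongRay) (hy : y ≠ rayZero) :
    ∃ u : ℕ → LongRay, Monotone u ∧ (∀ n, u n < y) ∧ IsLUB (Set.range u) y := by
  classical
  set β := ordOf y with hβ
  have hβ1 : β + 1 < Omega1 := by
    rw [Ordinal.add_one_eq_succ]
    exact omega1_isLimit.succ_lt (ordOf_lt y)
  have hcnt : (Set.Iio (β+1)).Countable := by
    rw [Cardinal.countable_iff_lt_aleph_one, Ordinal.mk_Iio_ordinal]
    have h1 : (β+1).card < Cardinal.aleph 1 := by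
      rw [← Cardinal.lt_ord, ← omega1_eq]; exact hβ1
    have h2 : Cardinal.lift.{1} (β+1).card < Cardinal.lift.{1} (Cardinal.aleph 1) :=
      Cardinal.lift_lt.2 h1
    rwa [Cardinal.lift_aleph, Ordinal.lift_one] at h2
  have hblt : β < β + 1 := by
    rw [Ordinal.add_one_eq_succ]; exact Order.lt_succ β
  obtain ⟨fo, hfo⟩ := hcnt.exists_eq_range ⟨β, Set.mem_Iio.2 hblt⟩
  obtain ⟨fq, hfq⟩ := exists_surjective_nat ℚ
  have hz0 : rayZero < y := lt_of_le_of_ne (rayZero_le y) (Ne.symm hy)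
  set e : ℕ → LongRay := fun m =>
    if mkO (fo (Nat.unpair m).1) ((fq (Nat.unpair m).2 : ℝ)) < y
    then mkO (fo (Nat.unpair m).1) ((fq (Nat.unpair m).2 : ℝ)) else rayZero with he
  have he_lt : ∀ m, e m < y := by
    intro m
    by_cases h : mkO (fo (Nat.unpair m).1) ((fq (Nat.unpair m).2 : ℝ)) < y
    · simpa [he, h] using h
    · simpa [he, h] using hz0
  have hcof : ∀ z, z < y → ∃ m, z ≤ e m := by
    intro z hz
    have key : ∃ (δ : Ordinal) (q : ℚ) (hδ : δ < Omega1) (hq : 0 ≤ (q:ℝ) ∧ (q:ℝ) < 1),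
        δ ∈ Set.Iio (β+1) ∧ z ≤ mk δ hδ (q:ℝ) hq ∧ mk δ hδ (q:ℝ) hq < y := by
      rcases lt_def.1 hz with h | ⟨h, h2⟩
      · obtain ⟨q, hq1, hq2⟩ := exists_rat_btwn (reOf_lt_one z)
        have hq0 : (0:ℝ) ≤ (q:ℝ) := le_of_lt (lt_of_le_of_lt (reOf_nonneg z) hq1)
        refine ⟨ordOf z, q, ordOf_lt z, ⟨hq0, hq2⟩, ?_, ?_, ?_⟩
        · exact Set.mem_Iio.2 (lt_trans h hblt)
        · exact le_def.2 (Or.inr ⟨rfl, le_of_lt (by simpa using hq1)⟩)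
        · exact lt_def.2 (Or.inl (by simpa using h))
      · obtain ⟨q, hq1, hq2⟩ := exists_rat_btwn h2
        have hq0 : (0:ℝ) ≤ (q:ℝ) := le_of_lt (lt_of_le_of_lt (reOf_nonneg z) hq1)
        refine ⟨ordOf z, q, ordOf_lt z, ⟨hq0, lt_trans hq2 (reOf_lt_one y)⟩, ?_, ?_, ?_⟩
        · exact Set.mem_Iio.2 (h ▸ hblt)
        · exact le_def.2 (Or.inr ⟨rfl, le_of_lt (by simpa using hq1)⟩)
        · exact lt_def.2 (Or.inr ⟨by simpa using h, by simpa using hq2⟩)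
    obtain ⟨δ, q, hδ, hq, hmem, hle, hlty⟩ := key
    have : δ ∈ Set.range fo := by rw [← hfo]; exact hmem
    obtain ⟨a, ha⟩ := this
    obtain ⟨b, hb⟩ := hfq q
    refine ⟨Nat.pair a b, ?_⟩
    have hee : e (Nat.pair a b) = mk δ hδ (q:ℝ) hq := by
      rw [he]
      simp only [Nat.unpair_pair, ha, hb]
      rw [mkO_eq δ (q:ℝ) hδ hq]
      exact if_pos hlty
    rw [hee]; exact hle
  set u : ℕ → LongRay := fun n => Nat.rec (e 0) (fun n ih => max ih (e (n+1))) n with hu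
  have hu_succ : ∀ n, u (n+1) = max (u n) (e (n+1)) := fun n => rfl
  have humono : Monotone u := monotone_nat_of_le_succ (fun n => by rw [hu_succ]; exact le_max_left _ _)
  have hu_lt : ∀ n, u n < y := by
    intro n
    induction n with
    | zero => exact he_lt 0
    | succ n ih => rw [hu_succ]; exact max_lt ih (he_lt (n+1))
  have he_le : ∀ n, e n ≤ u n := by
    intro n
    cases n with
    | zero => exact le_refl _
    | succ n => rw [hu_succ]; exact le_max_right _ _
  refine ⟨u, humono, hu_lt, ?_, ?_⟩
  · rintro _ ⟨n, rfl⟩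
    exact le_of_lt (hu_lt n)
  · intro c hc
    by_contra hcy
    have hcy' : c < y := not_le.1 hcy
    obtain ⟨d, hd1, hd2⟩ := dense_lt hcy'
    obtain ⟨m, hm⟩ := hcof d hd2
    exact absurd (le_trans hm (le_trans (he_le m) (hc ⟨m, rfl⟩))) (not_le.2 hd1)

lemma right_approach (y : LongRay) :
    ∃ v : ℕ → LongRay, (∀ n, y < v n) ∧ Filter.Tendsto v Filter.atTop (nhds y) := by
  set x := reOf y with hx
  have hx1 : x < 1 := reOf_lt_one y
  have hx0 : 0 ≤ x := reOf_nonneg y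
  have h1x : (0:ℝ) < 1 - x := by linarith
  have hmem : ∀ n : ℕ, 0 ≤ x + (1-x)/(n+2) ∧ x + (1-x)/(n+2) < 1 := by
    intro n
    have hpos : (0:ℝ) < (1-x)/((n:ℝ)+2) := div_pos h1x (by positivity)
    constructor
    · linarith
    · have h2 : (1-x)/((n:ℝ)+2) ≤ (1-x)/2 :=
        div_le_div_of_nonneg_left (le_of_lt h1x) (by norm_num)
          (by linarith [Nat.cast_nonneg (α := ℝ) n])
      linarith
  set v : ℕ → LongRay := fun n => mk (ordOf y) (ordOf_lt y) (x + (1-x)/(n+2)) (hmem n) with hv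
  have hvgt : ∀ n, y < v n := by
    intro n
    refine lt_def.2 (Or.inr ⟨rfl, ?_⟩)
    simp only [hv, reOf_mk]
    have : (0:ℝ) < (1-x)/((n:ℝ)+2) := div_pos h1x (by positivity)
    linarith
  have hanti : Antitone v := by
    intro a b hab
    refine le_def.2 (Or.inr ⟨rfl, ?_⟩)
    simp only [hv, reOf_mk]
    have : (1-x)/((b:ℝ)+2) ≤ (1-x)/((a:ℝ)+2) :=
      div_le_div_of_nonneg_left (le_of_lt h1x) (by positivity)
        (by have := (Nat.cast_le (α := ℝ)).2 hab; linarith)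
    linarith
  have hreal : Filter.Tendsto (fun n : ℕ => x + (1-x)/((n:ℝ)+2)) Filter.atTop (nhds x) := by
    have h1 : Filter.Tendsto (fun n : ℕ => ((n:ℝ)+2)) Filter.atTop Filter.atTop :=
      Filter.tendsto_atTop_add_const_right _ 2 tendsto_natCast_atTop_atTop
    have h2 : Filter.Tendsto (fun n : ℕ => (1-x)/((n:ℝ)+2)) Filter.atTop (nhds 0) :=
      Filter.Tendsto.div_atTop tendsto_const_nhds h1
    simpa using Filter.Tendsto.add (tendsto_const_nhds (x := x)) h2
  have hglb : IsGLB (Set.range v) y := by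
    constructor
    · rintro _ ⟨n, rfl⟩
      exact le_of_lt (hvgt n)
    · intro c hc
      rcases le_or_gt c y with h | h
      · exact h
      rcases lt_def.1 h with h1 | ⟨h1, h2⟩
      · have := ordOf_mono (hc ⟨0, rfl⟩)
        simp only [hv, ordOf_mk] at this
        exact absurd (lt_of_lt_of_le h1 this) (lt_irrefl _)
      · have hle : ∀ n : ℕ, reOf c ≤ x + (1-x)/((n:ℝ)+2) := by
          intro n
          rcases le_def.1 (hc ⟨n, rfl⟩) with h' | ⟨_, h'⟩
          · simp only [hv, ordOf_mk] at h'
            rw [← h1] at h'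
            exact absurd h' (lt_irrefl _)
          · simpa [hv] using h'
        have : reOf c ≤ x := ge_of_tendsto hreal (Filter.Eventually.of_forall hle)
        exact absurd (lt_of_lt_of_le h2 this) (lt_irrefl _)
  exact ⟨v, hvgt, tendsto_atTop_isGLB hanti hglb⟩

lemma seq_rec (R : ℕ → LongRay → LongRay → Prop) (h : ∀ k x, ∃ y, x < y ∧ R k x y)
    (x0 : LongRay) :
    ∃ s : ℕ → LongRay, s 0 = x0 ∧ (∀ k, s k < s (k+1)) ∧ ∀ k, R k (s k) (s (k+1)) := by
  choose F hF1 hF2 using h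
  exact ⟨fun k => Nat.rec x0 (fun k ih => F k ih) k, rfl, fun k => hF1 k _, fun k => hF2 k _⟩

lemma longray_induction (Q : LongRay → Prop) (t : LongRay) (h0 : Q rayZero)
    (hlim : ∀ y, y ≠ rayZero → (∀ z, z < y → Q z) → Q y)
    (hsucc : ∀ y, (∀ z, z ≤ y → Q z) → y < t →
      ∃ y', y < y' ∧ y' ≤ t ∧ ∀ z, y < z → z ≤ y' → Q z) :
    Q t := by
  set A : Set LongRay := {y | y ≤ t ∧ ∀ z, z ≤ y → Q z} with hA
  have h0A : rayZero ∈ A := by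
    refine ⟨rayZero_le t, fun z hz => ?_⟩
    have : z = rayZero := le_antisymm hz (rayZero_le z)
    rwa [this]
  obtain ⟨l, hl⟩ := exists_isLUB A ⟨rayZero, h0A⟩ ⟨t, fun y hy => hy.1⟩
  have hlt : l ≤ t := hl.2 (fun y hy => hy.1)
  have hQlt : ∀ z, z < l → Q z := by
    intro z hz
    by_contra hq
    have hub : z ∈ upperBounds A := by
      intro a ha
      by_contra hza
      exact hq (ha.2 z (le_of_lt (not_le.1 hza)))
    exact absurd (hl.2 hub) (not_le.2 hz)
  have hQl : Q l := by
    rcases eq_or_ne l rayZero with h | h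
    · rwa [h]
    · exact hlim l h hQlt
  have hlA : l ∈ A := by
    refine ⟨hlt, fun z hz => ?_⟩
    rcases lt_or_eq_of_le hz with h | h
    · exact hQlt z h
    · rwa [h]
  rcases eq_or_lt_of_le hlt with h | h
  · exact h ▸ hQl
  · obtain ⟨y', hy1, hy2, hy3⟩ := hsucc l hlA.2 h
    have : y' ∈ A := by
      refine ⟨hy2, fun z hz => ?_⟩
      rcases le_or_gt z l with h' | h'
      · exact hlA.2 z h'
      · exact hy3 z h' hz
    exact absurd (hl.1 this) (not_le.2 hy1)

lemma bddAbove_image_Iic {g : LongRay → LongRay} (hg : Continuous g) (t : LongRay) :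
    BddAbove (g '' Set.Iic t) := by
  refine longray_induction (fun t => BddAbove (g '' Set.Iic t)) t ?_ ?_ ?_
  · have : g '' Set.Iic rayZero = {g rayZero} := by
      apply Set.Subset.antisymm
      · rintro _ ⟨z, hz, rfl⟩
        have : z = rayZero := le_antisymm hz (rayZero_le z)
        rw [this]; rfl
      · rintro _ rfl
        exact ⟨rayZero, Set.mem_Iic.2 (le_refl _), rfl⟩
    show BddAbove (g '' Set.Iic rayZero)
    rw [this]
    exact bddAbove_singleton
  · intro y hy ih
    obtain ⟨u, humono, hult, hulub⟩ := left_approach y hy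
    have hch : ∀ n : ℕ, ∃ c, ∀ w ∈ g '' Set.Iic (u n), w ≤ c := by
      intro n
      obtain ⟨c, hc⟩ := ih (u n) (hult n)
      exact ⟨c, fun w hw => hc hw⟩
    choose cs hcs using hch
    obtain ⟨C, hC⟩ := seq_bddAbove cs
    refine ⟨max C (g y), ?_⟩
    rintro _ ⟨z, hz, rfl⟩
    rcases eq_or_lt_of_le (Set.mem_Iic.1 hz) with h | h
    · rw [h]; exact le_max_right _ _
    · have : ∃ n, z ≤ u n := by
        by_contra hno
        push_neg at hno
        have : y ≤ z := hulub.2 (by rintro _ ⟨n, rfl⟩; exact le_of_lt (hno n))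
        exact absurd (lt_of_lt_of_le h this) (lt_irrefl _)
      obtain ⟨n, hn⟩ := this
      exact le_trans (le_trans (hcs n (g z) ⟨z, Set.mem_Iic.2 hn, rfl⟩) (hC n)) (le_max_left _ _)
  · intro y ih hyt
    by_contra hno
    push_neg at hno
    obtain ⟨m, hm⟩ := ih y (le_refl y)
    obtain ⟨W, hW⟩ := exists_gt (max m (g y))
    obtain ⟨v, hvgt, hvten⟩ := right_approach y
    have hv'gt : ∀ n, y < min (v n) t := fun n => lt_min (hvgt n) hyt
    have hv'ten : Filter.Tendsto (fun n => min (v n) t) Filter.atTop (nhds y) :=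
      tendsto_of_tendsto_of_tendsto_of_le_of_le tendsto_const_nhds hvten
        (fun n => le_of_lt (hv'gt n)) (fun n => min_le_left _ _)
    have hz : ∀ n : ℕ, ∃ z, y < z ∧ z ≤ min (v n) t ∧ ¬ BddAbove (g '' Set.Iic z) := by
      intro n
      obtain ⟨z, h1, h2, h3⟩ := hno (min (v n) t) (hv'gt n) (min_le_right _ _)
      exact ⟨z, h1, h2, h3⟩
    choose zs hz1 hz2 hz3 using hz
    have hp : ∀ n : ℕ, ∃ p, y < p ∧ p ≤ min (v n) t ∧ W ≤ g p := by
      intro n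
      obtain ⟨_, ⟨p, hp1, rfl⟩, hp2⟩ := (not_bddAbove_iff').1 (hz3 n) W
      have hWgp : W ≤ g p := le_of_not_ge hp2
      have hpy : y < p := by
        by_contra hpy
        have : g p ≤ m := hm ⟨p, Set.mem_Iic.2 (not_lt.1 hpy), rfl⟩
        exact absurd (lt_of_lt_of_le (lt_of_le_of_lt (le_max_left m (g y)) hW) hWgp)
          (not_lt.2 this)
      exact ⟨p, hpy, le_trans hp1 (hz2 n), hWgp⟩
    choose ps hp1 hp2 hp3 using hp
    have hpten : Filter.Tendsto ps Filter.atTop (nhds y) :=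
      tendsto_of_tendsto_of_tendsto_of_le_of_le tendsto_const_nhds hv'ten
        (fun n => le_of_lt (hp1 n)) hp2
    have : Filter.Tendsto (fun n => g (ps n)) Filter.atTop (nhds (g y)) :=
      (hg.tendsto y).comp hpten
    have hWy : W ≤ g y := ge_of_tendsto this (Filter.Eventually.of_forall hp3)
    exact absurd (lt_of_le_of_lt (le_max_right m (g y)) hW) (not_lt.2 hWy)

open Filter in
lemma robust (G : LongRay × LongRay → LongRay) (hG : Continuous G)
    (h0 : ∀ w b : LongRay, ∃ s, b ≤ s ∧ w ≤ G (s, rayZero)) (t : LongRay) :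
    ∀ w b : LongRay, ∃ s, b ≤ s ∧ w ≤ G (s, t) := by
  refine longray_induction (fun t => ∀ w b : LongRay, ∃ s, b ≤ s ∧ w ≤ G (s, t)) t h0 ?_ ?_
  · intro y hy ihlt w b
    obtain ⟨u, humono, hult, hulub⟩ := left_approach y hy
    obtain ⟨w', hw'⟩ := exists_gt w
    have hstep : ∀ (k : ℕ) (x : LongRay), ∃ s', x < s' ∧ w' ≤ G (s', u (Nat.unpair k).1) := by
      intro k x
      obtain ⟨x', hx'⟩ := exists_gt x
      obtain ⟨s', hs1, hs2⟩ := ihlt (u (Nat.unpair k).1) (hult _) w' x'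
      exact ⟨s', lt_of_lt_of_le hx' hs1, hs2⟩
    obtain ⟨s, hs0, hsinc, hsR⟩ := seq_rec _ hstep b
    have hsmono : Monotone s := monotone_nat_of_le_succ (fun k => le_of_lt (hsinc k))
    obtain ⟨bb, hbb⟩ := seq_bddAbove s
    obtain ⟨l, hl⟩ := exists_isLUB (Set.range s) ⟨s 0, ⟨0, rfl⟩⟩
      ⟨bb, by rintro _ ⟨k, rfl⟩; exact hbb k⟩
    have hts : Tendsto s atTop (nhds l) := tendsto_atTop_isLUB hsmono hl
    have hkey : ∀ m : ℕ, w' ≤ G (l, u m) := by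
      intro m
      have hmono2 : StrictMono (fun j : ℕ => Nat.pair m j + 1) := by
        intro a b' hab
        exact Nat.add_lt_add_right (Nat.pair_lt_pair_right m hab) 1
      have hsub : Tendsto (fun j => s (Nat.pair m j + 1)) atTop (nhds l) :=
        hts.comp hmono2.tendsto_atTop
      have hGt : Tendsto (fun j => G (s (Nat.pair m j + 1), u m)) atTop (nhds (G (l, u m))) :=
        (hG.tendsto _).comp (hsub.prodMk_nhds tendsto_const_nhds)
      refine ge_of_tendsto hGt (Filter.Eventually.of_forall (fun j => ?_))
      have := hsR (Nat.pair m j)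
      simpa [Nat.unpair_pair] using this
    have hyt : Tendsto u atTop (nhds y) := tendsto_atTop_isLUB humono hulub
    have hGy : Tendsto (fun m => G (l, u m)) atTop (nhds (G (l, y))) :=
      (hG.tendsto _).comp (tendsto_const_nhds.prodMk_nhds hyt)
    refine ⟨l, ?_, le_trans (le_of_lt hw')
      (ge_of_tendsto hGy (Filter.Eventually.of_forall hkey))⟩
    rw [← hs0]; exact hl.1 ⟨0, rfl⟩
  · intro y ihle hyt
    by_contra hno
    push_neg at hno
    obtain ⟨v, hvgt, hvten⟩ := right_approach y
    have hv'gt : ∀ n, y < min (v n) t := fun n => lt_min (hvgt n) hyt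
    have hv'ten : Tendsto (fun n => min (v n) t) atTop (nhds y) :=
      tendsto_of_tendsto_of_tendsto_of_le_of_le tendsto_const_nhds hvten
        (fun n => le_of_lt (hv'gt n)) (fun n => min_le_left _ _)
    have hzch : ∀ n : ℕ, ∃ z, y < z ∧ z ≤ min (v n) t ∧
        ¬ (∀ w b : LongRay, ∃ s, b ≤ s ∧ w ≤ G (s, z)) :=
      fun n => by
          obtain ⟨z, h1, h2, h3⟩ := hno _ (hv'gt n) (min_le_right _ _)
          exact ⟨z, h1, h2, by push_neg; exact h3⟩
    choose zs hz1 hz2 hz3 using hzch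
    have hzten : Tendsto zs atTop (nhds y) :=
      tendsto_of_tendsto_of_tendsto_of_le_of_le tendsto_const_nhds hv'ten
        (fun n => le_of_lt (hz1 n)) hz2
    have hwb : ∀ n : ℕ, ∃ wn bn : LongRay, ∀ s', bn ≤ s' → G (s', zs n) < wn := by
      intro n
      have h3 := hz3 n
      push_neg at h3
      obtain ⟨wn, bn, hh⟩ := h3
      exact ⟨wn, bn, hh⟩
    choose ws bs hwbs using hwb
    obtain ⟨W, hWb⟩ := seq_bddAbove ws
    obtain ⟨B, hBb⟩ := seq_bddAbove bs
    have hbound : ∀ s', B ≤ s' → G (s', y) ≤ W := by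
      intro s' hs'
      have hGt : Tendsto (fun n => G (s', zs n)) atTop (nhds (G (s', y))) :=
        (hG.tendsto _).comp (tendsto_const_nhds.prodMk_nhds hzten)
      refine le_of_tendsto hGt (Filter.Eventually.of_forall (fun n => ?_))
      exact le_of_lt (lt_of_lt_of_le (hwbs n s' (le_trans (hBb n) hs')) (hWb n))
    obtain ⟨W', hW'⟩ := exists_gt W
    obtain ⟨s', hs1, hs2⟩ := ihle y (le_refl y) W' B
    exact absurd hs2 (not_le.2 (lt_of_le_of_lt (hbound s' hs1) hW'))

end LR

/-- if `f` is `I`-cofinal and `I ⊆ J`, then `f` is `J`-cofinal. -/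
theorem cofinal_mono (n : ℕ) (f : (Fin n → LongRay) → LongRay) (hf : Continuous f)
    (I J : Finset (Fin n)) (hI : I.Nonempty) (hIcof : ICofinal n f I) (hIJ : I ⊆ J) :
    ICofinal n f J := by
  classical
  intro hbdd
  set pt : LongRay → LongRay → (Fin n → LongRay) :=
    fun s t => fun i => if i ∈ I then s else if i ∈ J then t else rayZero with hpt
  set G : LongRay × LongRay → LongRay := fun p => f (pt p.1 p.2) with hG
  have hGc : Continuous G := by
    apply hf.comp
    apply continuous_pi
    intro i
    by_cases h1 : i ∈ I
    · simpa [hpt, h1] using continuous_fst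
    · by_cases h2 : i ∈ J
      · simpa [hpt, h1, h2] using continuous_snd
      · simpa [hpt, h1, h2] using continuous_const
  have hptJ : ∀ l : LongRay, pt l l ∈ Delta n J (fun _ => rayZero) := by
    intro l
    constructor
    · intro i hi i' hi'
      by_cases h1 : i ∈ I <;> by_cases h2 : i' ∈ I <;> simp [hpt, h1, h2, hi, hi']
    · intro j hj
      have hjI : j ∉ I := fun hh => hj (hIJ hh)
      simp [hpt, hjI, hj]
  have h0 : ∀ w b : LongRay, ∃ s, b ≤ s ∧ w ≤ G (s, rayZero) := by
    intro w b
    have hgc : Continuous (fun s : LongRay => G (s, rayZero)) :=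
      hGc.comp (continuous_id.prodMk continuous_const)
    obtain ⟨m, hm⟩ := LR.bddAbove_image_Iic hgc b
    obtain ⟨val, ⟨x, hxD, rfl⟩, hval⟩ := (not_bddAbove_iff').1 hIcof (max w m)
    obtain ⟨i0, hi0⟩ := hI
    set sx := x i0 with hsx
    have hxeq : x = pt sx rayZero := by
      funext i
      by_cases h1 : i ∈ I
      · simp only [hpt, if_pos h1]
        exact hxD.1 i h1 i0 hi0
      · by_cases h2 : i ∈ J
        · simp only [hpt, if_neg h1, if_pos h2]
          exact hxD.2 i h1
        · simp only [hpt, if_neg h1, if_neg h2]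
          exact hxD.2 i h1
    have hGs : ¬ G (sx, rayZero) ≤ max w m := by
      show ¬ f (pt sx rayZero) ≤ max w m
      rw [← hxeq]
      exact hval
    have hbs : b ≤ sx := by
      by_contra h
      exact hGs (le_trans (hm ⟨sx, Set.mem_Iic.2 (le_of_not_ge h), rfl⟩) (le_max_right w m))
    exact ⟨sx, hbs, le_of_lt (lt_of_le_of_lt (le_max_left w m) (not_le.1 hGs))⟩
  have hU := LR.robust G hGc h0
  obtain ⟨ub, hub⟩ := hbdd
  obtain ⟨W, hW⟩ := LR.exists_gt ub
  have hstep : ∀ (k : ℕ) (x : LongRay), ∃ y, x < y ∧ W ≤ G (y, x) := by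
    intro k x
    obtain ⟨x', hx'⟩ := LR.exists_gt x
    obtain ⟨sA, h1, h2⟩ := hU x W x'
    exact ⟨sA, lt_of_lt_of_le hx' h1, h2⟩
  obtain ⟨s, hs0, hsinc, hsR⟩ := LR.seq_rec (fun _ x y => W ≤ G (y, x)) hstep rayZero
  have hsmono : Monotone s := monotone_nat_of_le_succ (fun k => le_of_lt (hsinc k))
  obtain ⟨bb, hbb⟩ := LR.seq_bddAbove s
  obtain ⟨l, hl⟩ := LR.exists_isLUB (Set.range s) ⟨s 0, ⟨0, rfl⟩⟩
    ⟨bb, by rintro _ ⟨k, rfl⟩; exact hbb k⟩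
  have hts : Filter.Tendsto s Filter.atTop (nhds l) := tendsto_atTop_isLUB hsmono hl
  have hGt : Filter.Tendsto (fun k => G (s (k+1), s k)) Filter.atTop (nhds (G (l, l))) :=
    (hGc.tendsto _).comp ((hts.comp (Filter.tendsto_add_atTop_nat 1)).prodMk_nhds hts)
  have hWl : W ≤ G (l, l) := ge_of_tendsto hGt (Filter.Eventually.of_forall hsR)
  have hfl : f (pt l l) ≤ ub := hub ⟨pt l l, hptJ l, rfl⟩
  exact absurd (le_trans hWl hfl) (not_le.2 hW)
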